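/- Let G be a finite group, let G' be a normal subgroup of G, and let A' be a subgroup of G' that is normal in G'. Denote by B the index of G' in G and by J the index of A' in G'. Then A' contains a subgroup A such that A is normal in G and the index of A in G is at most B·J^B. -/

import Mathlib

/-- Let `G` be a finite group, `G'` a normal subgroup of `G`, and `A'` a subgroup of `G'`
that is normal in `G'`. If `B` is the index of `G'` in `G` and `J` is the index of `A'` in
`G'`, then `A'` contains a subgroup `A` that is normal in `G` of index at most `B * J ^ B`. -/
theorem exists_normal_subgroup_of_normal_in_normal
    (G : Type*) [Group G] [Finite G] (G' : Subgroup G) (hG' : G'.Normal)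
    (A' : Subgroup G) (hle : A' ≤ G') (hA' : (A'.subgroupOf G').Normal) :
    ∃ A : Subgroup G, A ≤ A' ∧ A.Normal ∧
      A.index ≤ G'.index * (A'.subgroupOf G').index ^ G'.index := by
  classical
  have hconj : ∀ a ∈ A', ∀ g ∈ G', g * a * g⁻¹ ∈ A' := by
    intro a ha g hg
    have := hA'.conj_mem ⟨a, hle ha⟩ (by simpa [Subgroup.mem_subgroupOf] using ha) ⟨g, hg⟩
    simpa [Subgroup.mem_subgroupOf] using this
  refine ⟨A'.normalCore, A'.normalCore_le, A'.normalCore_normal, ?_⟩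
  set f : G ⧸ G' → Subgroup G :=
    fun q => A'.comap (MulAut.conj q.out).toMonoidHom with hf
  have hcore : A'.normalCore = ⨅ q : G ⧸ G', f q := by
    apply le_antisymm
    · refine le_iInf fun q => ?_
      intro x hx
      simpa [hf, MulAut.conj] using hx q.out
    · intro x hx b
      simp only [Subgroup.mem_iInf] at hx
      -- decompose b = h' * o where o = out' of ⟦b⟧, h' ∈ G'
      set o := (QuotientGroup.mk b : G ⧸ G').out with ho
      have hmem : o⁻¹ * b ∈ G' := by
        rw [← QuotientGroup.eq]
        simp only [ho]
        exact (QuotientGroup.out_eq' (QuotientGroup.mk b))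
      have hmem' : b * o⁻¹ ∈ G' := by
        have := hG'.conj_mem _ hmem b
        simpa [mul_assoc] using this
      have hx' : o * x * o⁻¹ ∈ A' := by
        have := hx (QuotientGroup.mk b)
        simpa [hf, MulAut.conj] using this
      have key := hconj _ hx' _ hmem'
      have : b * o⁻¹ * (o * x * o⁻¹) * (b * o⁻¹)⁻¹ = b * x * b⁻¹ := by
        group
      rwa [this] at key
  have hcoreleG' : A'.normalCore ≤ G' := A'.normalCore_le.trans hle
  have hrel : ∀ q : G ⧸ G', (f q).relIndex G' = (A'.subgroupOf G').index := by
    intro q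
    have : (f q).relIndex G' = A'.relIndex (G'.map (MulAut.conj q.out).toMonoidHom) := by
      rw [hf, Subgroup.relIndex_comap]
    have hmap : G'.map (MulAut.conj q.out).toMonoidHom = G' := by
      ext x
      constructor
      · rintro ⟨y, hy, rfl⟩
        exact hG'.conj_mem y hy _
      · intro hx
        refine ⟨q.out⁻¹ * x * q.out, ?_, ?_⟩
        · have := hG'.conj_mem x hx q.out⁻¹
          simpa using this
        · simp [MulAut.conj]
          group
    rw [this, hmap]
    rfl
  have := Fintype.ofFinite (G ⧸ G')
  have hinf : (⨅ q : G ⧸ G', f q).relIndex G' ≤ ∏ q : G ⧸ G', (f q).relIndex G' :=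
    Subgroup.relIndex_iInf_le f
  have hprod : ∏ q : G ⧸ G', (f q).relIndex G' =
      (A'.subgroupOf G').index ^ G'.index := by
    simp only [hrel, Finset.prod_const, Finset.card_univ]
    congr 1
    rw [Subgroup.index, Nat.card_eq_fintype_card]
  calc A'.normalCore.index = A'.normalCore.relIndex G' * G'.index :=
        (Subgroup.relIndex_mul_index hcoreleG').symm
    _ ≤ (A'.subgroupOf G').index ^ G'.index * G'.index := by
        apply Nat.mul_le_mul_right
        rw [hcore]
        exact hinf.trans_eq hprod
    _ = G'.index * (A'.subgroupOf G').index ^ G'.index := mul_comm _ _
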